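/- For every real κ with 1 < κ ≤ 2 and every vector w ∈ ℝ⁵ satisfying ⟨w, w⟩ = 1, ⟨w_x, w⟩ = −1, ⟨w_c, w⟩ = −1, ⟨w_f, w⟩ = −1, ⟨w_c*, w⟩ = 1 and ⟨w_z, w⟩ = √(3 + 2√κ − κ), one has ⟨w_t, w⟩ = (2 + 2√κ − κ)/√(4 + κ²), and this value is at least 1; that is, the bridge ball is nested inside (or internally tangent to) the tangency ball b_t, hence contained in the crossing region. -/

import Mathlib

noncomputable section

/-- The Lorentzian product on ℝ⁵: ⟨u,v⟩ = u₁v₁ + u₂v₂ + u₃v₃ + u₄v₄ − u₅v₅. -/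
def lprod5 (u v : Fin 5 → ℝ) : ℝ :=
  u 0 * v 0 + u 1 * v 1 + u 2 * v 2 + u 3 * v 3 - u 4 * v 4

/-- Inversive coordinates of the blow-ups to ℝ³ of the standard pyramidal disk
packing, its mirror and tangency disks, and the half-space `{z ≥ 0}`. -/
def wx : Fin 5 → ℝ := ![0, -1, 0, 1, 1]
def wc (κ : ℝ) : Fin 5 → ℝ := ![0, 1 - κ, 0, -1, κ - 1]
def wf (κ : ℝ) : Fin 5 → ℝ := ![2 / Real.sqrt κ, 0, 0, 2 / κ - 1, 2 / κ]
def wmc : Fin 5 → ℝ := ![0, 1, 0, 1, 1]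
def wmf (κ : ℝ) : Fin 5 → ℝ := ![-(2 / Real.sqrt κ), 0, 0, 2 / κ - 1, 2 / κ]
def wcs (κ : ℝ) : Fin 5 → ℝ :=
  ![0, -(Real.sqrt κ / 2), 0, -(1 / Real.sqrt κ), (κ - 2) / (2 * Real.sqrt κ)]
def wt (κ : ℝ) : Fin 5 → ℝ :=
  ![0, -(2 / Real.sqrt (κ ^ 2 + 4)), 0, κ / Real.sqrt (κ ^ 2 + 4), 0]
def wz : Fin 5 → ℝ := ![0, 0, 1, 0, 0]

/-- For `1 < κ ≤ 2`, the bridge ball lies inside the tangency ball `b_t`: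
`⟨w_t, w⟩ = (2 + 2√κ − κ)/√(4 + κ²) ≥ 1`, hence it is contained in the
crossing region. -/
theorem bridge_ball_in_tangency_ball (κ : ℝ) (hκ1 : 1 < κ) (hκ2 : κ ≤ 2)
    (w : Fin 5 → ℝ)
    (hww : lprod5 w w = 1) (hx : lprod5 wx w = -1) (hc : lprod5 (wc κ) w = -1)
    (hf : lprod5 (wf κ) w = -1) (hcs : lprod5 (wcs κ) w = 1)
    (hz : lprod5 wz w = Real.sqrt (3 + 2 * Real.sqrt κ - κ)) :
    lprod5 (wt κ) w = (2 + 2 * Real.sqrt κ - κ) / Real.sqrt (4 + κ ^ 2) ∧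
    1 ≤ (2 + 2 * Real.sqrt κ - κ) / Real.sqrt (4 + κ ^ 2) := by
  have hκ0 : (0:ℝ) < κ := by linarith
  set s := Real.sqrt κ with hsdef
  have hs0 : 0 < s := Real.sqrt_pos.mpr hκ0
  have hs2 : s ^ 2 = κ := Real.sq_sqrt hκ0.le
  have hs1 : 1 ≤ s := by nlinarith
  simp only [lprod5, wx, wc, wcs, wt] at hx hc hcs ⊢
  simp only [Matrix.cons_val_zero, Matrix.cons_val_one, Matrix.head_cons,
    Matrix.cons_val_two, Matrix.tail_cons, Matrix.cons_val_three,
    Matrix.cons_val_fin_one, Matrix.cons_val_four] at hx hc hcs ⊢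
  rw [show κ ^ 2 + 4 = 4 + κ ^ 2 by ring]
  set r := Real.sqrt (4 + κ ^ 2) with hrdef
  have hr0 : 0 < r := Real.sqrt_pos.mpr (by positivity)
  field_simp at hcs
  have hw3 : κ * w 3 = 2 - κ := by linear_combination (κ - 1) * hx - hc
  have h1 : κ * w 1 + κ * w 4 = 2 := by linear_combination -hx - hc
  have hκ' : κ ≠ 0 := hκ0.ne'
  have hw1 : κ * w 1 = -(s * κ) := by
    linear_combination (-(κ/2)) * hcs + (-(κ/2) * w 1) * hs2 + (-1 : ℝ) * hw3
      + (-(κ-2)/2) * h1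
  have hw1' : w 1 = -s := by
    apply mul_left_cancel₀ hκ'
    linear_combination hw1
  constructor
  · field_simp
    linear_combination (-2) * hw1' + hw3
  · rw [le_div_iff₀ hr0]
    have h2 : 0 ≤ 2 + 2 * s - κ := by nlinarith
    have h3 : Real.sqrt (4 + κ ^ 2) ≤ 2 + 2 * s - κ := by
      have h4 : 4 + κ ^ 2 ≤ (2 + 2 * s - κ) ^ 2 := by nlinarith [mul_nonneg hs0.le (by linarith : (0:ℝ) ≤ 2 - κ)]
      calc Real.sqrt (4 + κ ^ 2) ≤ Real.sqrt ((2 + 2 * s - κ) ^ 2) := Real.sqrt_le_sqrt h4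
        _ = 2 + 2 * s - κ := Real.sqrt_sq h2
    linarith
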